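/- Suppose f : ℝ^m → ℝ is convex and differentiable, g : ℝ^m → ℝ is a function with g(θ) − g(θ₀) ≥ 0 for all θ and g(θ) − g(θ₀) = 0 only at θ = θ₀, and f_n : ℝ^m → ℝ is a sequence of convex functions converging pointwise to g. If θ̂_n minimizes f_n, then θ̂_n → θ₀. -/

import Mathlib

open Filter Set Metric

set_option maxHeartbeats 1000000 in
theorem stmt_12 (m : ℕ) (f g : (Fin m → ℝ) → ℝ) (θ₀ : Fin m → ℝ)
    (hf : ConvexOn ℝ Set.univ f) (hf' : Differentiable ℝ f)
    (hg : ∀ θ, 0 ≤ g θ - g θ₀) (hg0 : ∀ θ, g θ - g θ₀ = 0 → θ = θ₀)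
    (fn : ℕ → (Fin m → ℝ) → ℝ) (hfn : ∀ n, ConvexOn ℝ Set.univ (fn n))
    (hlim : ∀ θ, Filter.Tendsto (fun n => fn n θ) Filter.atTop (nhds (g θ)))
    (θhat : ℕ → Fin m → ℝ) (hmin : ∀ n, IsMinOn (fn n) Set.univ (θhat n)) :
    Filter.Tendsto θhat Filter.atTop (nhds θ₀) := by
  rcases subsingleton_or_nontrivial (Fin m → ℝ) with hsub | hnt
  · have h : θhat = fun _ => θ₀ := funext fun n => Subsingleton.elim _ _
    rw [h]; exact tendsto_const_nhds
  -- g is convex as a pointwise limit of convex functions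
  have hgconv : ConvexOn ℝ (Set.univ : Set (Fin m → ℝ)) g := by
    refine ⟨convex_univ, fun x _ y _ a b ha hb hab => ?_⟩
    have h1 : Tendsto (fun n => fn n (a • x + b • y)) atTop (nhds (g (a • x + b • y))) := hlim _
    have h2 : Tendsto (fun n => a * fn n x + b * fn n y) atTop (nhds (a * g x + b * g y)) :=
      ((hlim x).const_mul a).add ((hlim y).const_mul b)
    have h3 := le_of_tendsto_of_tendsto' h1 h2
      fun n => (hfn n).2 (mem_univ x) (mem_univ y) ha hb hab
    simpa [smul_eq_mul] using h3
  have hgc : Continuous g := continuousOn_univ.1 (hgconv.continuousOn isOpen_univ)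
  rw [Metric.tendsto_nhds]
  intro ε hε
  -- the sphere of radius ε around θ₀
  have hSne : (sphere θ₀ ε).Nonempty := NormedSpace.sphere_nonempty.2 hε.le
  obtain ⟨s₀, hs₀, hs₀min⟩ := (isCompact_sphere θ₀ ε).exists_isMinOn hSne hgc.continuousOn
  set c : ℝ := g s₀ - g θ₀ with hc
  have hcpos : 0 < c := by
    rcases lt_or_eq_of_le (hg s₀) with h | h
    · exact h
    · exfalso
      have hs : s₀ = θ₀ := hg0 s₀ h.symm
      have : dist s₀ θ₀ = ε := mem_sphere.1 hs₀
      rw [hs, dist_self] at this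
      linarith
  set δ : ℝ := c / 4 with hδ
  have hδpos : 0 < δ := by positivity
  -- the cube vertices containing the ball of radius 2ε
  set R : ℝ := 2 * ε with hR
  set VSet : Set (Fin m → ℝ) := Set.pi Set.univ (fun i => {θ₀ i - R, θ₀ i + R}) with hVdef
  have hVfin : VSet.Finite := Set.Finite.pi fun i => (Set.finite_singleton _).insert _
  have hVne : VSet.Nonempty := Set.univ_pi_nonempty_iff.2 fun i => ⟨_, Set.mem_insert _ _⟩
  have hVball : closedBall θ₀ R ⊆ convexHull ℝ VSet := by
    intro x hx
    rw [hVdef, convexHull_pi]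
    intro i _
    show x i ∈ convexHull ℝ {θ₀ i - R, θ₀ i + R}
    have hxi : dist (x i) (θ₀ i) ≤ R :=
      (dist_pi_le_iff (by positivity)).1 (mem_closedBall.1 hx) i
    rw [convexHull_pair, segment_eq_Icc (by linarith : θ₀ i - R ≤ θ₀ i + R)]
    rw [Real.dist_eq, abs_le] at hxi
    constructor <;> [linarith [hxi.2]; linarith [hxi.1]]
  -- upper bound M for g on the vertices
  obtain ⟨M₀, hM₀⟩ : ∃ M₀, ∀ v ∈ VSet, g v ≤ M₀ :=
    ((hVfin.image g).bddAbove).imp fun b hb v hv => hb (mem_image_of_mem g hv)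
  set M : ℝ := M₀ + 1 with hM
  have hMv : ∀ v ∈ VSet, g v < M := fun v hv => by
    have := hM₀ v hv; rw [hM]; linarith
  have hgθ₀M : g θ₀ < M := by
    obtain ⟨v, hv⟩ := hVne
    have h1 := hg v
    have h2 := hMv v hv
    linarith
  set D : ℝ := 2 * (M - g θ₀ + δ) with hD
  have hDpos : 0 < D := by rw [hD]; nlinarith
  set η : ℝ := min (ε / 2) (ε * δ / D) with hη
  have hηpos : 0 < η := lt_min (by positivity) (by positivity)
  -- finite net on the sphere
  obtain ⟨F, hFS, hFfin, hFcov⟩ := (isCompact_sphere θ₀ ε).finite_cover_balls hηpos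
  -- eventual estimates
  have E1 : ∀ᶠ n in atTop, ∀ v ∈ VSet, fn n v < M :=
    hVfin.eventually_all.2 fun v hv => (hlim v).eventually_lt_const (hMv v hv)
  have E2 : ∀ᶠ n in atTop, fn n θ₀ < g θ₀ + δ :=
    (hlim θ₀).eventually_lt_const (by linarith)
  have E3 : ∀ᶠ n in atTop, ∀ p ∈ F, g p - δ < fn n p :=
    hFfin.eventually_all.2 fun p hp => (hlim p).eventually_const_lt (by linarith)
  filter_upwards [E1, E2, E3] with n h1 h2 h3
  by_contra hcon
  push_neg at hcon
  -- upper bound for fn n on the closed ball of radius R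
  have hub : ∀ x ∈ closedBall θ₀ R, fn n x ≤ M := by
    intro x hx
    obtain ⟨v, hv, hle⟩ := (hfn n).exists_ge_of_mem_convexHull (subset_univ VSet) (hVball hx)
    exact hle.trans (h1 v hv).le
  -- key: on the sphere, fn n is strictly above fn n θ₀
  have key : ∀ s ∈ sphere θ₀ ε, fn n θ₀ < fn n s := by
    intro s hs
    obtain ⟨p, hpF, hps⟩ := mem_iUnion₂.1 (hFcov hs)
    have hpS : p ∈ sphere θ₀ ε := hFS hpF
    have hgp : g θ₀ + c ≤ g p := by
      have h4 := isMinOn_iff.1 hs₀min p hpS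
      rw [hc]; linarith
    have hfp : g θ₀ + c - δ < fn n p := by
      have := h3 p hpF; linarith
    -- show fn n p - δ ≤ fn n s
    have hstep : fn n p - δ ≤ fn n s := by
      by_cases hsp : s = p
      · rw [hsp]; linarith
      · have hdpos : 0 < dist p s := dist_pos.2 (Ne.symm hsp)
        set t : ℝ := dist p s / ε with ht
        have htpos : 0 < t := by positivity
        have htη : dist p s < η := by
          rw [mem_ball, dist_comm] at hps; exact hps
        have htle : t ≤ η / ε := by
          rw [ht]; exact (div_le_div_iff_of_pos_right hε).2 htη.le
        have ht2 : t ≤ 1 / 2 := by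
          refine htle.trans ?_
          have h9 : η ≤ ε / 2 := min_le_left _ _
          have := (div_le_div_iff_of_pos_right hε).2 h9
          calc η / ε ≤ ε / 2 / ε := this
            _ = 1 / 2 := by field_simp
        have htD : t * D ≤ δ := by
          have h9 : η ≤ ε * δ / D := min_le_right _ _
          have h10 : t ≤ ε * δ / D / ε := htle.trans ((div_le_div_iff_of_pos_right hε).2 h9)
          have h11 : ε * δ / D / ε = δ / D := by
            field_simp
          rw [h11] at h10
          calc t * D ≤ δ / D * D := by
                exact mul_le_mul_of_nonneg_right h10 hDpos.le
            _ = δ := by field_simp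
        set q : Fin m → ℝ := s + (ε / dist p s) • (p - s) with hqdef
        have hqs : dist q s = ε := by
          have hq1 : q - s = (ε / dist p s) • (p - s) := by rw [hqdef]; abel
          rw [dist_eq_norm, hq1, norm_smul, Real.norm_eq_abs,
            abs_of_pos (by positivity : (0:ℝ) < ε / dist p s), ← dist_eq_norm]
          field_simp
        have hqball : q ∈ closedBall θ₀ R := by
          rw [mem_closedBall]
          have hsθ : dist s θ₀ = ε := mem_sphere.1 hs
          calc dist q θ₀ ≤ dist q s + dist s θ₀ := dist_triangle _ _ _
            _ = ε + ε := by rw [hqs, hsθ]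
            _ = R := by rw [hR]; ring
        have hfq : fn n q ≤ M := hub q hqball
        have hpt : (1 - t) • s + t • q = p := by
          have hts : t • ((ε / dist p s) • (p - s)) = p - s := by
            rw [smul_smul]
            have h12 : t * (ε / dist p s) = 1 := by
              rw [ht]; field_simp
            rw [h12, one_smul]
          have h13 : (1 - t) • s + t • q = s + t • ((ε / dist p s) • (p - s)) := by
            rw [hqdef]; module
          rw [h13, hts]; abel
        have hcomb2 : fn n p ≤ (1 - t) * fn n s + t * fn n q := by
          have h8 := (hfn n).2 (mem_univ s) (mem_univ q)
            (by linarith : (0:ℝ) ≤ 1 - t) htpos.le (by ring)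
          rw [hpt] at h8
          simpa [smul_eq_mul] using h8
        have hA' : fn n p - t * M ≤ (1 - t) * fn n s := by
          nlinarith [mul_le_mul_of_nonneg_left hfq htpos.le]
        have hcδ : c = 4 * δ := by rw [hδ]; ring
        nlinarith [mul_pos htpos hδpos, mul_le_mul_of_nonneg_left hfq htpos.le]
    have hfθ : fn n θ₀ < g θ₀ + δ := h2
    have hcδ : c = 4 * δ := by rw [hδ]; ring
    linarith
  -- build the point on the sphere between θ₀ and θhat n
  set d : ℝ := dist (θhat n) θ₀ with hd
  have hεd : ε ≤ d := hcon
  have hdpos : 0 < d := lt_of_lt_of_le hε hεd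
  set u : ℝ := ε / d with hu
  have hu0 : 0 < u := by positivity
  have hu1 : u ≤ 1 := (div_le_one hdpos).2 hεd
  set s₁ : Fin m → ℝ := θ₀ + u • (θhat n - θ₀) with hs₁def
  have hs₁ : s₁ ∈ sphere θ₀ ε := by
    rw [mem_sphere, hs₁def, dist_eq_norm]
    have h14 : θ₀ + u • (θhat n - θ₀) - θ₀ = u • (θhat n - θ₀) := by abel
    have h15 : ‖θhat n - θ₀‖ = d := by rw [hd, dist_eq_norm]
    rw [h14, norm_smul, Real.norm_eq_abs, abs_of_pos hu0, h15, hu]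
    field_simp
  have hcomb : fn n s₁ ≤ (1 - u) * fn n θ₀ + u * fn n (θhat n) := by
    have h5 := (hfn n).2 (mem_univ θ₀) (mem_univ (θhat n)) (by linarith : (0:ℝ) ≤ 1 - u)
      hu0.le (by ring)
    have h6 : (1 - u) • θ₀ + u • θhat n = s₁ := by
      rw [hs₁def]; module
    rw [h6] at h5
    simpa [smul_eq_mul] using h5
  have hminn : fn n (θhat n) ≤ fn n θ₀ := isMinOn_iff.1 (hmin n) θ₀ (mem_univ θ₀)
  have hkey := key s₁ hs₁
  nlinarith [hu0.le, mul_nonneg hu0.le (sub_nonneg.2 hminn)]
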